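/- Let θ > 0 and c > −1 be real, let j ≥ 1 be an integer, and define the polynomial q_j(y) = (−1)^j Γ(θ j + c + 1) ∑_{l=0}^{j} (−1)^l (j choose l) y^l / Γ(θ l + c + 1). Then for every integer m with 0 ≤ m < j one has ∫_0^∞ x^{c+m} e^{−x} q_j(x^θ) dx = 0. -/

import Mathlib

open MeasureTheory

open Polynomial Finset

lemma gamma_ratio (s : ℝ) (hs : 0 < s) (m : ℕ) :
    Real.Gamma (s + m) = Real.Gamma s * ∏ i ∈ Finset.range m, (s + i) := by
  induction m with
  | zero => simp
  | succ n ih =>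
    have h1 : s + (n + 1 : ℕ) = (s + n) + 1 := by push_cast; ring
    rw [h1, Real.Gamma_add_one (by positivity), ih, Finset.prod_range_succ]
    ring

lemma diff_eval (P : Polynomial ℝ) (x : ℝ) :
    (P - P.comp (X + C 1)).eval x = P.eval x - P.eval (x + 1) := by
  simp [eval_comp]

lemma diff_natDegree_lt (P : Polynomial ℝ) (hP : P - P.comp (X + C 1) ≠ 0) :
    (P - P.comp (X + C 1)).natDegree < P.natDegree := by
  have hP0 : P ≠ 0 := by
    intro h; apply hP; simp [h]
  have hn : (X + C (1:ℝ)).natDegree ≠ 0 := by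
    rw [Polynomial.natDegree_X_add_C]; exact one_ne_zero
  have hlc : P.leadingCoeff = (P.comp (X + C 1)).leadingCoeff := by
    rw [Polynomial.leadingCoeff_comp hn, Polynomial.leadingCoeff_X_add_C]
    simp
  have hQ : P.comp (X + C 1) ≠ 0 := by
    intro h
    rw [h, Polynomial.leadingCoeff_zero, Polynomial.leadingCoeff_eq_zero] at hlc
    exact hP0 hlc
  have hdeg : P.degree = (P.comp (X + C 1)).degree := by
    rw [Polynomial.degree_eq_natDegree hP0, Polynomial.degree_eq_natDegree hQ,
      Polynomial.natDegree_comp, Polynomial.natDegree_X_add_C, mul_one]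
  have := Polynomial.degree_sub_lt hdeg hP0 hlc
  exact Polynomial.natDegree_lt_natDegree hP this

lemma altsum (j : ℕ) (P : Polynomial ℝ) (h : P.natDegree < j) :
    ∑ l ∈ Finset.range (j + 1), (-1 : ℝ) ^ l * (j.choose l : ℝ) * P.eval (l : ℝ) = 0 := by
  induction j generalizing P with
  | zero => exact absurd h (Nat.not_lt_zero _)
  | succ j ih =>
    set Q := P - P.comp (X + C 1) with hQdef
    have key : ∑ l ∈ Finset.range (j + 2), (-1 : ℝ) ^ l * ((j+1).choose l : ℝ) * P.eval (l : ℝ)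
        = ∑ l ∈ Finset.range (j + 1), (-1 : ℝ) ^ l * (j.choose l : ℝ) * Q.eval (l : ℝ) := by
      simp only [hQdef, diff_eval]
      push_cast
      rw [Finset.sum_range_succ' (fun l => (-1 : ℝ) ^ l * ((j+1).choose l : ℝ) * P.eval (l : ℝ))]
      have hsplit : ∀ l, ((j+1).choose (l+1) : ℝ) = (j.choose l : ℝ) + (j.choose (l+1) : ℝ) := by
        intro l; rw [Nat.choose_succ_succ]; push_cast; ring
      simp only [hsplit]
      have h2 : ∑ l ∈ Finset.range (j + 1), (-1 : ℝ) ^ l * (j.choose l : ℝ) * (P.eval (l : ℝ) - P.eval ((l : ℝ)+1))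
          = (∑ l ∈ Finset.range (j + 1), (-1 : ℝ) ^ l * (j.choose l : ℝ) * P.eval (l : ℝ))
            - ∑ l ∈ Finset.range (j + 1), (-1 : ℝ) ^ l * (j.choose l : ℝ) * P.eval ((l : ℝ)+1) := by
        rw [← Finset.sum_sub_distrib]; congr 1; ext l; ring
      rw [h2]
      rw [Finset.sum_range_succ' (fun l => (-1 : ℝ) ^ l * (j.choose l : ℝ) * P.eval (l : ℝ))]
      have h3 : ∑ l ∈ Finset.range (j + 1), (-1 : ℝ) ^ (l+1) * ((j.choose l : ℝ) + (j.choose (l+1) : ℝ)) * P.eval ((l : ℝ)+1)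
          = (∑ l ∈ Finset.range (j + 1), (-1 : ℝ) ^ (l+1) * (j.choose l : ℝ) * P.eval ((l : ℝ)+1))
            + ∑ l ∈ Finset.range (j + 1), (-1 : ℝ) ^ (l+1) * (j.choose (l+1) : ℝ) * P.eval ((l : ℝ)+1) := by
        rw [← Finset.sum_add_distrib]; congr 1; ext l; ring
      push_cast
      rw [h3]
      have h4 : ∑ l ∈ Finset.range (j + 1), (-1 : ℝ) ^ (l+1) * (j.choose (l+1) : ℝ) * P.eval ((l : ℝ)+1)
          = ∑ l ∈ Finset.range j, (-1 : ℝ) ^ (l+1) * (j.choose (l+1) : ℝ) * P.eval ((l : ℝ)+1) := by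
        rw [Finset.sum_range_succ]; simp
      rw [h4]
      have h5 : ∑ l ∈ Finset.range (j + 1), (-1 : ℝ) ^ (l+1) * (j.choose l : ℝ) * P.eval ((l : ℝ)+1)
          = - ∑ l ∈ Finset.range (j + 1), (-1 : ℝ) ^ l * (j.choose l : ℝ) * P.eval ((l : ℝ)+1) := by
        rw [← Finset.sum_neg_distrib]; congr 1; ext l; ring
      rw [h5]
      simp only [Nat.choose_zero_right, Nat.cast_one]
      ring
    rw [key]
    by_cases hQ0 : Q = 0
    · simp [hQ0]
    · exact ih Q (lt_of_lt_of_le (diff_natDegree_lt P hQ0) (Nat.lt_succ_iff.mp h))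

/-- Konhauser's biorthogonal polynomial `q_j` for the Laguerre weight
annihilates the moments `x^(c+m)` for `m < j`. -/
theorem stmt_5 (θ c : ℝ) (hθ : 0 < θ) (hc : -1 < c) (j : ℕ) (hj : 1 ≤ j)
    (q : ℝ → ℝ)
    (hq : ∀ y : ℝ, q y =
      (-1 : ℝ) ^ j * Real.Gamma (θ * j + c + 1) *
        ∑ l ∈ Finset.range (j + 1),
          (-1 : ℝ) ^ l * (j.choose l : ℝ) * y ^ l / Real.Gamma (θ * l + c + 1))
    (m : ℕ) (hm : m < j) :
    ∫ x in Set.Ioi (0 : ℝ), x ^ (c + (m : ℝ)) * Real.exp (-x) * q (x ^ θ) = 0 := by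
  have hsl : ∀ l : ℕ, 0 < θ * l + c + 1 := by
    intro l
    have h1 : (0:ℝ) ≤ θ * l := by positivity
    linarith
  have hslm : ∀ l : ℕ, 0 < θ * l + c + (m : ℝ) + 1 := by
    intro l
    have h1 := hsl l
    have h2 : (0:ℝ) ≤ (m : ℝ) := Nat.cast_nonneg m
    linarith
  set K : ℝ := (-1 : ℝ) ^ j * Real.Gamma (θ * j + c + 1) with hK
  set a : ℕ → ℝ := fun l => K * ((-1) ^ l * (j.choose l : ℝ) / Real.Gamma (θ * l + c + 1)) with ha
  have hint : ∀ l ∈ Finset.range (j + 1),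
      IntegrableOn (fun x : ℝ => a l * (Real.exp (-x) * x ^ (θ * l + c + (m : ℝ) + 1 - 1)))
        (Set.Ioi (0:ℝ)) := by
    intro l _
    exact (Real.GammaIntegral_convergent (hslm l)).const_mul _
  have step1 : (∫ x in Set.Ioi (0 : ℝ), x ^ (c + (m : ℝ)) * Real.exp (-x) * q (x ^ θ))
      = ∑ l ∈ Finset.range (j + 1), a l * Real.Gamma (θ * l + c + (m : ℝ) + 1) := by
    have hcong : Set.EqOn (fun x : ℝ => x ^ (c + (m : ℝ)) * Real.exp (-x) * q (x ^ θ))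
        (fun x : ℝ => ∑ l ∈ Finset.range (j + 1),
          a l * (Real.exp (-x) * x ^ (θ * l + c + (m : ℝ) + 1 - 1))) (Set.Ioi 0) := by
      intro x hx
      have hx0 : (0:ℝ) < x := hx
      simp only [hq, Finset.mul_sum]
      apply Finset.sum_congr rfl
      intro l _
      have hxθ : (x ^ θ) ^ l = x ^ (θ * l) := by
        rw [← Real.rpow_natCast (x ^ θ) l, ← Real.rpow_mul hx0.le]
      have hxadd : x ^ (c + (m : ℝ)) * x ^ (θ * l) = x ^ (θ * l + c + (m : ℝ)) := by
        rw [← Real.rpow_add hx0]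
        ring_nf
      field_simp [ha]
      rw [hxθ]
      simp only [ha]
      rw [show θ * (l:ℝ) + c + (m:ℝ) + 1 - 1 = θ * l + c + m by ring, ← hxadd]
      ring
    rw [setIntegral_congr_fun measurableSet_Ioi hcong, integral_finset_sum _ hint]
    apply Finset.sum_congr rfl
    intro l _
    rw [MeasureTheory.integral_const_mul, ← Real.Gamma_eq_integral (hslm l)]
  rw [step1]
  set P : Polynomial ℝ := ∏ i ∈ Finset.range m, (C θ * X + C (c + 1 + i)) with hPdef
  have hPdeg : P.natDegree < j := by
    apply lt_of_le_of_lt _ hm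
    calc P.natDegree ≤ ∑ i ∈ Finset.range m, (C θ * X + C (c + 1 + (i:ℝ))).natDegree :=
          Polynomial.natDegree_prod_le _ _
      _ ≤ ∑ _i ∈ Finset.range m, 1 := by
          apply Finset.sum_le_sum
          intro i _
          exact Polynomial.natDegree_linear_le
      _ = m := by simp
  have heval : ∀ l : ℕ, P.eval (l : ℝ) = ∏ i ∈ Finset.range m, (θ * l + c + 1 + i) := by
    intro l
    simp only [hPdef, eval_prod, eval_add, eval_mul, eval_C, eval_X]
    apply Finset.prod_congr rfl
    intro i _
    ring
  have hterm : ∀ l ∈ Finset.range (j + 1),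
      a l * Real.Gamma (θ * l + c + (m : ℝ) + 1)
        = K * ((-1) ^ l * (j.choose l : ℝ) * P.eval (l : ℝ)) := by
    intro l _
    have hG : Real.Gamma (θ * l + c + (m : ℝ) + 1)
        = Real.Gamma (θ * l + c + 1) * ∏ i ∈ Finset.range m, (θ * l + c + 1 + i) := by
      have h1 : θ * l + c + (m : ℝ) + 1 = (θ * l + c + 1) + (m : ℕ) := by push_cast; ring
      rw [h1, gamma_ratio _ (hsl l) m]
    have hGne : Real.Gamma (θ * l + c + 1) ≠ 0 := (Real.Gamma_pos_of_pos (hsl l)).ne'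
    rw [hG, heval l, ha]
    field_simp
  rw [Finset.sum_congr rfl hterm, ← Finset.mul_sum, altsum j P hPdeg, mul_zero]
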